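/- Let G be a group together with a central element ε ∈ G satisfying ε^2 = 1 and ε ≠ 1, such that for all g, h ∈ G either g * h = h * g or g * h = ε * (h * g). Let S be a subgroup of G with ε ∉ S. Then the normalizer of S in G equals the centralizer of S in G. -/

import Mathlib

/-- In an "anticommuting-pair group" `(G, ε)` (where `ε` is central of order two and any two
elements either commute or anticommute up to `ε`), the normalizer of a subgroup `S` not
containing `ε` equals its centralizer. -/
theorem normalizer_eq_centralizer {G : Type*} [Group G] (ε : G)
    (hcen : ∀ g : G, ε * g = g * ε) (hε2 : ε ^ 2 = 1) (hε1 : ε ≠ 1)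
    (hanti : ∀ g h : G, g * h = h * g ∨ g * h = ε * (h * g))
    (S : Subgroup G) (hS : ε ∉ S) :
    Subgroup.normalizer (S : Set G) = Subgroup.centralizer (S : Set G) := by
  apply le_antisymm
  · intro g hg
    rw [Subgroup.mem_normalizer_iff] at hg
    rw [Subgroup.mem_centralizer_iff]
    intro s hs
    rcases hanti g s with h | h
    · exact h.symm
    · exfalso
      have h1 : g * s * g⁻¹ ∈ S := (hg s).mp hs
      have h2 : g * s * g⁻¹ = ε * s := by
        rw [h, mul_assoc, mul_assoc, mul_inv_cancel, mul_one]
      rw [h2] at h1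
      have : ε = (ε * s) * s⁻¹ := by group
      rw [this] at hS
      exact hS (S.mul_mem h1 (S.inv_mem hs))
  · intro g hg
    rw [Subgroup.mem_centralizer_iff] at hg
    rw [Subgroup.mem_normalizer_iff]
    intro s
    constructor
    · intro hs
      have : g * s * g⁻¹ = s := by rw [← hg s hs]; group
      rwa [this]
    · intro hs
      have hc := hg _ hs
      have h4 : s = g * s * g⁻¹ := by
        calc s = g⁻¹ * (g * s * g⁻¹ * g) := by group
        _ = g⁻¹ * (g * (g * s * g⁻¹)) := by rw [hc]
        _ = g * s * g⁻¹ := by group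
      rw [h4]; exact hs
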